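/- arXiv:2511.07136 — 2 statements merged into one kernel-verified Lean document; each statement's English description precedes it below -/
import Mathlib

section
/- In 𝒰, for all i ≠ j in I and all r, s ∈ ℕ one has [b_{i,r+1}, b_{j,s}] = [b_{i,r}, b_{j,s+1}]. -/
noncomputable section

/-- Data of a symmetrizable generalized Cartan matrix `(c_{ij})` (of finite type size bounds)
together with a positive symmetrizer `(d_i)`. -/
structure CartanData (I : Type) [Fintype I] : Type where
  c : I → I → ℤ
  d : I → ℝ
  c_diag : ∀ i, c i i = 2
  c_nonpos : ∀ i j, i ≠ j → c i j ≤ 0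
  c_zero_iff : ∀ i j, c i j = 0 ↔ c j i = 0
  c_bound : ∀ i j, i ≠ j → c i j * c j i ≤ 3
  d_pos : ∀ i, 0 < d i
  d_symm : ∀ i j, d i * (c i j : ℝ) = d j * (c j i : ℝ)

/-- The pairing `(α_i, α_j) = d_i · c_{ij}`. -/
def CartanData.al {I : Type} [Fintype I] (A : CartanData I) (i j : I) : ℝ :=
  A.d i * (A.c i j : ℝ)

/-- Generators for Drinfeld-type presentations: `h i r` stands for `h_{i,2r+1}` and
`b i r` stands for `b_{i,r}`. -/
inductive TYGen (I : Type) : Type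
  | h : I → ℕ → TYGen I
  | b : I → ℕ → TYGen I

section Algebras

variable {I : Type} [Fintype I] [DecidableEq I]

/-- The element `h_{i,r}` of the free algebra, for `r : ℤ`, with the conventions
`h_{i,-1} = 1` and `h_{i,r} = 0` for `r` even or `r < -1`. -/
def TYh (i : I) (r : ℤ) : FreeAlgebra ℂ (TYGen I) :=
  if r = -1 then 1
  else if 0 ≤ r ∧ r % 2 = 1 then FreeAlgebra.ι ℂ (TYGen.h i ((r - 1) / 2).toNat)
  else 0

/-- The generator `b_{i,r}` of the free algebra. -/
def TYb (i : I) (r : ℕ) : FreeAlgebra ℂ (TYGen I) := FreeAlgebra.ι ℂ (TYGen.b i r)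

/-- The generator `h_{i,2r+1}` of the free algebra. -/
def TYhodd (i : I) (r : ℕ) : FreeAlgebra ℂ (TYGen I) := FreeAlgebra.ι ℂ (TYGen.h i r)

/-- The element `h_{i,n}` of the free algebra, `n : ℕ`, with the convention `h_{i,2r} = 0`. -/
def TYhnat (i : I) (n : ℕ) : FreeAlgebra ℂ (TYGen I) :=
  if n % 2 = 1 then FreeAlgebra.ι ℂ (TYGen.h i ((n - 1) / 2)) else 0

/-- Defining relations of the twisted Yangian `ᵢY` in Drinfeld presentation. -/
inductive TYRel (A : CartanData I) : FreeAlgebra ℂ (TYGen I) → FreeAlgebra ℂ (TYGen I) → Prop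
  | ty0 (i j : I) (r s : ℤ) : TYRel A ⁅TYh i r, TYh j s⁆ 0
  | ty1 (i j : I) (r s : ℕ) :
      TYRel A (⁅TYh i ((r : ℤ) + 1), TYb j s⁆ - ⁅TYh i ((r : ℤ) - 1), TYb j (s + 2)⁆)
        ((A.al i j : ℂ) •
            (TYh i ((r : ℤ) - 1) * TYb j (s + 1) + TYb j (s + 1) * TYh i ((r : ℤ) - 1))
          + (((A.al i j : ℂ) ^ 2 / 4) • ⁅TYh i ((r : ℤ) - 1), TYb j s⁆))
  | ty2 (i j : I) (r s : ℕ) :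
      TYRel A (⁅TYb i (r + 1), TYb j s⁆ - ⁅TYb i r, TYb j (s + 1)⁆)
        (((A.al i j : ℂ) / 2) • (TYb i r * TYb j s + TYb j s * TYb i r)
          - (if i = j then (2 : ℂ) * (-1 : ℂ) ^ s else 0) • TYh i ((r : ℤ) + (s : ℤ) + 1))
  | serre0 (i j : I) (hc : A.c i j = 0) : TYRel A ⁅TYb i 0, TYb j 0⁆ 0
  | serre1 (i j : I) (hc : A.c i j = -1) :
      TYRel A ⁅TYb i 0, ⁅TYb i 0, TYb j 0⁆⁆ ((-(A.d i : ℂ)) • TYb j 0)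
  | serre2 (i j : I) (hc : A.c i j = -2) :
      TYRel A ⁅TYb i 0, ⁅TYb i 0, ⁅TYb i 0, TYb j 0⁆⁆⁆
        (((-4 : ℂ) * (A.d i : ℂ)) • ⁅TYb i 0, TYb j 0⁆)
  | serre3 (i j : I) (hc : A.c i j = -3) :
      TYRel A ⁅TYb i 0, ⁅TYb i 0, ⁅TYb i 0, ⁅TYb i 0, TYb j 0⁆⁆⁆⁆
        (((-10 : ℂ) * (A.d i : ℂ)) • ⁅TYb i 0, ⁅TYb i 0, TYb j 0⁆⁆
          + ((-9 : ℂ) * (A.d i : ℂ) ^ 2) • TYb j 0)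

/-- The twisted Yangian `ᵢY` in Drinfeld presentation. -/
abbrev TY (A : CartanData I) : Type := RingQuot (TYRel A)

/-- The generator `h_{i,2r+1}` of the twisted Yangian `ᵢY`. -/
def tyH (A : CartanData I) (i : I) (r : ℕ) : TY A :=
  RingQuot.mkAlgHom ℂ (TYRel A) (TYhodd i r)

/-- The generator `b_{i,r}` of the twisted Yangian `ᵢY`. -/
def tyB (A : CartanData I) (i : I) (r : ℕ) : TY A :=
  RingQuot.mkAlgHom ℂ (TYRel A) (TYb i r)

/-- Defining relations of the algebra `𝔅` (the presentation of `U(g[z]^ω̌)`). -/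
inductive BRel (A : CartanData I) : FreeAlgebra ℂ (TYGen I) → FreeAlgebra ℂ (TYGen I) → Prop
  | hh (i j : I) (r s : ℕ) : BRel A ⁅TYhodd i r, TYhodd j s⁆ 0
  | hb (i j : I) (r s : ℕ) :
      BRel A ⁅TYhodd i r, TYb j s⁆ ((2 * (A.al i j : ℂ)) • TYb j (2 * r + s + 1))
  | bb (i j : I) (r s : ℕ) :
      BRel A (⁅TYb i (r + 1), TYb j s⁆ - ⁅TYb i r, TYb j (s + 1)⁆)
        ((-(if i = j then (-1 : ℂ) ^ r + (-1 : ℂ) ^ s else 0)) • TYhnat i (r + s + 1))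
  | serre0 (i j : I) (hc : A.c i j = 0) : BRel A ⁅TYb i 0, TYb j 0⁆ 0
  | serre1 (i j : I) (hc : A.c i j = -1) :
      BRel A ⁅TYb i 0, ⁅TYb i 0, TYb j 0⁆⁆ ((-(A.d i : ℂ)) • TYb j 0)
  | serre2 (i j : I) (hc : A.c i j = -2) :
      BRel A ⁅TYb i 0, ⁅TYb i 0, ⁅TYb i 0, TYb j 0⁆⁆⁆
        (((-4 : ℂ) * (A.d i : ℂ)) • ⁅TYb i 0, TYb j 0⁆)
  | serre3 (i j : I) (hc : A.c i j = -3) :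
      BRel A ⁅TYb i 0, ⁅TYb i 0, ⁅TYb i 0, ⁅TYb i 0, TYb j 0⁆⁆⁆⁆
        (((-10 : ℂ) * (A.d i : ℂ)) • ⁅TYb i 0, ⁅TYb i 0, TYb j 0⁆⁆
          + ((-9 : ℂ) * (A.d i : ℂ) ^ 2) • TYb j 0)

/-- The algebra `𝔅`. -/
abbrev BAlg (A : CartanData I) : Type := RingQuot (BRel A)

/-- The generator `h_{i,2r+1}` of `𝔅`. -/
def hB (A : CartanData I) (i : I) (r : ℕ) : BAlg A :=
  RingQuot.mkAlgHom ℂ (BRel A) (TYhodd i r)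

/-- The generator `b_{i,r}` of `𝔅`. -/
def bB (A : CartanData I) (i : I) (r : ℕ) : BAlg A :=
  RingQuot.mkAlgHom ℂ (BRel A) (TYb i r)

end Algebras

/-- Generators `h_{i,1}`, `b_{i,0}`, `b_{i,1}` for the minimalistic presentations. -/
inductive MinGen (I : Type) : Type
  | h1 : I → MinGen I
  | b0 : I → MinGen I
  | b1 : I → MinGen I

section MinAlgebras

variable {I : Type} [Fintype I] [DecidableEq I]

/-- The generator `h_{i,1}` of the free algebra. -/
def mh (i : I) : FreeAlgebra ℂ (MinGen I) := FreeAlgebra.ι ℂ (MinGen.h1 i)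

/-- The generator `b_{i,0}` of the free algebra. -/
def mb0 (i : I) : FreeAlgebra ℂ (MinGen I) := FreeAlgebra.ι ℂ (MinGen.b0 i)

/-- The generator `b_{i,1}` of the free algebra. -/
def mb1 (i : I) : FreeAlgebra ℂ (MinGen I) := FreeAlgebra.ι ℂ (MinGen.b1 i)

/-- Defining relations of the minimalistic presentation `ᵢY^min`. -/
inductive MinRel (A : CartanData I) : FreeAlgebra ℂ (MinGen I) → FreeAlgebra ℂ (MinGen I) → Prop
  | hh (i j : I) : MinRel A ⁅mh i, mh j⁆ 0
  | hb (i j : I) : MinRel A ⁅mh i, mb0 j⁆ ((2 * (A.al i j : ℂ)) • mb1 j)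
  | bb (i j : I) :
      MinRel A (⁅mb1 i, mb0 j⁆ - ⁅mb0 i, mb1 j⁆)
        (((A.al i j : ℂ) / 2) • (mb0 i * mb0 j + mb0 j * mb0 i)
          - (if i = j then (2 : ℂ) else 0) • mh i)
  | serre0 (i j : I) (hc : A.c i j = 0) : MinRel A ⁅mb0 i, mb0 j⁆ 0
  | serre1 (i j : I) (hc : A.c i j = -1) :
      MinRel A ⁅mb0 i, ⁅mb0 i, mb0 j⁆⁆ ((-(A.d i : ℂ)) • mb0 j)
  | serre2 (i j : I) (hc : A.c i j = -2) :
      MinRel A ⁅mb0 i, ⁅mb0 i, ⁅mb0 i, mb0 j⁆⁆⁆ (((-4 : ℂ) * (A.d i : ℂ)) • ⁅mb0 i, mb0 j⁆)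
  | serre3 (i j : I) (hc : A.c i j = -3) :
      MinRel A ⁅mb0 i, ⁅mb0 i, ⁅mb0 i, ⁅mb0 i, mb0 j⁆⁆⁆⁆
        (((-10 : ℂ) * (A.d i : ℂ)) • ⁅mb0 i, ⁅mb0 i, mb0 j⁆⁆
          + ((-9 : ℂ) * (A.d i : ℂ) ^ 2) • mb0 j)

/-- The relations of `ᵢY^min` together with the additional relation
`[h_{i₀,1},[b_{i₀,1},[h_{i₀,1},b_{i₀,1}]]] = (α_{i₀},α_{i₀})² [b_{i₀,1}², h_{i₀,1}]`. -/
inductive MinRelP (A : CartanData I) (i₀ : I) :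
    FreeAlgebra ℂ (MinGen I) → FreeAlgebra ℂ (MinGen I) → Prop
  | base {x y : FreeAlgebra ℂ (MinGen I)} : MinRel A x y → MinRelP A i₀ x y
  | extra : MinRelP A i₀ ⁅mh i₀, ⁅mb1 i₀, ⁅mh i₀, mb1 i₀⁆⁆⁆
      (((A.al i₀ i₀ : ℂ) ^ 2) • ⁅mb1 i₀ * mb1 i₀, mh i₀⁆)

/-- Defining relations of the algebra `𝒰`. -/
inductive URel (A : CartanData I) : FreeAlgebra ℂ (MinGen I) → FreeAlgebra ℂ (MinGen I) → Prop
  | hh (i j : I) : URel A ⁅mh i, mh j⁆ 0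
  | hb (i j : I) : URel A ⁅mh i, mb0 j⁆ ((2 * (A.al i j : ℂ)) • mb1 j)
  | bb (i j : I) :
      URel A ⁅mb1 i, mb0 j⁆ (⁅mb0 i, mb1 j⁆ - (if i = j then (2 : ℂ) else 0) • mh i)
  | serre0 (i j : I) (hc : A.c i j = 0) : URel A ⁅mb0 i, mb0 j⁆ 0
  | serre1 (i j : I) (hc : A.c i j = -1) :
      URel A ⁅mb0 i, ⁅mb0 i, mb0 j⁆⁆ ((-(A.d i : ℂ)) • mb0 j)
  | serre2 (i j : I) (hc : A.c i j = -2) :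
      URel A ⁅mb0 i, ⁅mb0 i, ⁅mb0 i, mb0 j⁆⁆⁆ (((-4 : ℂ) * (A.d i : ℂ)) • ⁅mb0 i, mb0 j⁆)
  | serre3 (i j : I) (hc : A.c i j = -3) :
      URel A ⁅mb0 i, ⁅mb0 i, ⁅mb0 i, ⁅mb0 i, mb0 j⁆⁆⁆⁆
        (((-10 : ℂ) * (A.d i : ℂ)) • ⁅mb0 i, ⁅mb0 i, mb0 j⁆⁆
          + ((-9 : ℂ) * (A.d i : ℂ) ^ 2) • mb0 j)

/-- The relations of `𝒰` together with the additional relation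
`[h_{i₀,1},[b_{i₀,1},[h_{i₀,1},b_{i₀,1}]]] = 0`. -/
inductive URelP (A : CartanData I) (i₀ : I) :
    FreeAlgebra ℂ (MinGen I) → FreeAlgebra ℂ (MinGen I) → Prop
  | base {x y : FreeAlgebra ℂ (MinGen I)} : URel A x y → URelP A i₀ x y
  | extra : URelP A i₀ ⁅mh i₀, ⁅mb1 i₀, ⁅mh i₀, mb1 i₀⁆⁆⁆ 0

/-- The algebra `𝒰`. -/
abbrev UAlg (A : CartanData I) : Type := RingQuot (URel A)

/-- The generator `h_{i,1}` of `𝒰`. -/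
def uH1 (A : CartanData I) (i : I) : UAlg A := RingQuot.mkAlgHom ℂ (URel A) (mh i)

/-- The generator `b_{i,0}` of `𝒰`. -/
def uB0 (A : CartanData I) (i : I) : UAlg A := RingQuot.mkAlgHom ℂ (URel A) (mb0 i)

/-- The generator `b_{i,1}` of `𝒰`. -/
def uB1 (A : CartanData I) (i : I) : UAlg A := RingQuot.mkAlgHom ℂ (URel A) (mb1 i)

/-- The elements `b_{i,r}` of `𝒰`, defined recursively by
`b_{i,r+1} := (2(α_i,α_i))⁻¹ [h_{i,1}, b_{i,r}]` for `r ≥ 1`. -/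
def uB (A : CartanData I) (i : I) : ℕ → UAlg A
  | 0 => uB0 A i
  | 1 => uB1 A i
  | r + 2 => (2 * (A.al i i : ℂ))⁻¹ • ⁅uH1 A i, uB A i (r + 1)⁆

/-- The elements `h_{i,r}` of `𝒰`: `h_{i,0} := 0`, `h_{i,1}` is the generator, and
`h_{i,r+1} := [b_{i,0}, b_{i,r+1}]` for `r ≥ 1`. -/
def uH (A : CartanData I) (i : I) : ℕ → UAlg A
  | 0 => 0
  | 1 => uH1 A i
  | r + 2 => ⁅uB0 A i, uB A i (r + 2)⁆

end MinAlgebras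

section ProofAux
set_option linter.unusedSectionVars false

variable {I : Type} [Fintype I] [DecidableEq I]

attribute [local instance] LieRing.ofAssociativeRing

lemma myMapBracket {R A B : Type*} [CommRing R] [Ring A] [Ring B] [Algebra R A] [Algebra R B]
    (f : A →ₐ[R] B) (x y : A) : f ⁅x, y⁆ = ⁅f x, f y⁆ := by
  simp [Ring.lie_def]

lemma qlie_smul {A : CartanData I} (c : ℂ) (x y : UAlg A) : ⁅x, c • y⁆ = c • ⁅x, y⁆ :=
  lie_smul c x y

lemma qsmul_lie {A : CartanData I} (c : ℂ) (x y : UAlg A) : ⁅c • x, y⁆ = c • ⁅x, y⁆ :=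
  smul_lie c x y

lemma qsub_smul {A : CartanData I} (r s : ℂ) (y : UAlg A) : (r - s) • y = r • y - s • y :=
  sub_smul r s y

lemma al_diag (A : CartanData I) (i : I) : A.al i i = 2 * A.d i := by
  simp [CartanData.al, A.c_diag i]; ring

lemma al_ne_zero (A : CartanData I) (i : I) : (2 * (A.al i i : ℂ)) ≠ 0 := by
  have hd := A.d_pos i
  have h : A.al i i ≠ 0 := by rw [al_diag]; positivity
  simp [h]

lemma al_symm (A : CartanData I) (i j : I) : A.al i j = A.al j i := A.d_symm i j

lemma U_hh (A : CartanData I) (i j : I) : ⁅uH1 A i, uH1 A j⁆ = 0 := by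
  have h := RingQuot.mkAlgHom_rel ℂ (URel.hh (A := A) i j)
  rw [myMapBracket, map_zero] at h
  exact h

lemma U_hb0 (A : CartanData I) (i j : I) :
    ⁅uH1 A i, uB A j 0⁆ = (2 * (A.al i j : ℂ)) • uB A j 1 := by
  have h := RingQuot.mkAlgHom_rel ℂ (URel.hb (A := A) i j)
  rw [myMapBracket, map_smul] at h
  exact h

lemma U_hb_self (A : CartanData I) (j : I) :
    ∀ s : ℕ, ⁅uH1 A j, uB A j s⁆ = (2 * (A.al j j : ℂ)) • uB A j (s + 1)
  | 0 => U_hb0 A j j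
  | s + 1 => by
    have h : uB A j (s + 2) = (2 * (A.al j j : ℂ))⁻¹ • ⁅uH1 A j, uB A j (s + 1)⁆ := rfl
    rw [h, smul_smul, mul_inv_cancel₀ (al_ne_zero A j), one_smul]

lemma U_hb (A : CartanData I) (i j : I) :
    ∀ s : ℕ, ⁅uH1 A i, uB A j s⁆ = (2 * (A.al i j : ℂ)) • uB A j (s + 1)
  | 0 => U_hb0 A i j
  | s + 1 => by
    have h2 : (2 * (A.al j j : ℂ)) • ⁅uH1 A i, uB A j (s + 1)⁆
        = (2 * (A.al j j : ℂ)) • ((2 * (A.al i j : ℂ)) • uB A j (s + 1 + 1)) := by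
      rw [← qlie_smul, ← U_hb_self A j s, leibniz_lie, U_hh, zero_lie, zero_add,
        U_hb A i j s, qlie_smul, U_hb_self A j (s + 1), smul_smul, smul_smul]
      congr 1
      ring
    exact smul_right_injective _ (al_ne_zero A j) h2

lemma U_bb0 (A : CartanData I) (i j : I) (hne : i ≠ j) :
    ⁅uB A i 1, uB A j 0⁆ = ⁅uB A i 0, uB A j 1⁆ := by
  have h := RingQuot.mkAlgHom_rel ℂ (URel.bb (A := A) i j)
  rw [map_sub, map_smul, myMapBracket, myMapBracket] at h
  simpa [if_neg hne, uB, uB0, uB1] using h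

lemma solve2 {A : CartanData I} (a b c : ℂ) (u v : UAlg A)
    (h1 : a • u + b • v = 0) (h2 : b • u + c • v = 0) (hd : a * c - b * b ≠ 0) :
    u = 0 ∧ v = 0 := by
  constructor
  · have h3 : (a * c - b * b) • u = c • (a • u + b • v) - b • (b • u + c • v) := by
      rw [smul_add, smul_add, smul_smul, smul_smul, smul_smul, smul_smul, qsub_smul]
      rw [mul_comm c a, mul_comm c b]
      abel
    rw [h1, h2, smul_zero, smul_zero, sub_zero] at h3
    exact (smul_eq_zero.mp h3).resolve_left hd
  · have h3 : (a * c - b * b) • v = a • (b • u + c • v) - b • (a • u + b • v) := by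
      rw [smul_add, smul_add, smul_smul, smul_smul, smul_smul, smul_smul, qsub_smul]
      rw [mul_comm b a]
      abel
    rw [h1, h2, smul_zero, smul_zero, sub_zero] at h3
    exact (smul_eq_zero.mp h3).resolve_left hd

lemma det_pos (A : CartanData I) (i j : I) (hne : i ≠ j) :
    0 < A.al i i * A.al j j - A.al i j * A.al j i := by
  have hdi := A.d_pos i
  have hdj := A.d_pos j
  have hb := A.c_bound i j hne
  have hb' : (A.c i j : ℝ) * (A.c j i : ℝ) ≤ 3 := by exact_mod_cast hb
  have h : A.al i i * A.al j j - A.al i j * A.al j i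
      = A.d i * A.d j * (4 - (A.c i j : ℝ) * (A.c j i : ℝ)) := by
    simp only [CartanData.al, A.c_diag i, A.c_diag j]
    push_cast
    ring
  rw [h]
  have : 0 < 4 - (A.c i j : ℝ) * (A.c j i : ℝ) := by linarith
  positivity

lemma det_ne (A : CartanData I) (i j : I) (hne : i ≠ j) :
    (2 * (A.al i i : ℂ)) * (2 * (A.al j j : ℂ)) -
      (2 * (A.al i j : ℂ)) * (2 * (A.al i j : ℂ)) ≠ 0 := by
  have h := det_pos A i j hne
  rw [← al_symm A i j] at h
  have hne' : (A.al i i * A.al j j - A.al i j * A.al i j : ℝ) ≠ 0 := ne_of_gt h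
  intro hc
  apply hne'
  have h4 : ((A.al i i * A.al j j - A.al i j * A.al i j : ℝ) : ℂ) = 0 := by
    push_cast
    linear_combination hc / 4
  exact_mod_cast h4

lemma U_hbb (A : CartanData I) (k i j : I) (p q : ℕ) :
    ⁅uH1 A k, ⁅uB A i p, uB A j q⁆⁆
      = (2 * (A.al k i : ℂ)) • ⁅uB A i (p + 1), uB A j q⁆
        + (2 * (A.al k j : ℂ)) • ⁅uB A i p, uB A j (q + 1)⁆ := by
  rw [leibniz_lie, U_hb A k i p, U_hb A k j q, qsmul_lie, qlie_smul]

lemma U_key (A : CartanData I) (i j : I) (hne : i ≠ j) (r s : ℕ)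
    (h : ⁅uB A i (r + 1), uB A j s⁆ = ⁅uB A i r, uB A j (s + 1)⁆) :
    ⁅uB A i (r + 2), uB A j s⁆ = ⁅uB A i (r + 1), uB A j (s + 1)⁆ ∧
      ⁅uB A i (r + 1), uB A j (s + 1)⁆ = ⁅uB A i r, uB A j (s + 2)⁆ := by
  have key : ∀ k : I,
      (2 * (A.al k i : ℂ)) • (⁅uB A i (r + 2), uB A j s⁆ - ⁅uB A i (r + 1), uB A j (s + 1)⁆)
      + (2 * (A.al k j : ℂ)) • (⁅uB A i (r + 1), uB A j (s + 1)⁆ - ⁅uB A i r, uB A j (s + 2)⁆)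
      = 0 := by
    intro k
    have h1 : ⁅uH1 A k, ⁅uB A i (r + 1), uB A j s⁆⁆
        = ⁅uH1 A k, ⁅uB A i r, uB A j (s + 1)⁆⁆ := by rw [h]
    rw [U_hbb, U_hbb] at h1
    rw [smul_sub, smul_sub]
    rw [show r + 1 + 1 = r + 2 from rfl, show s + 1 + 1 = s + 2 from rfl] at h1
    linear_combination (norm := abel) h1
  have e1 := key i
  have e2 := key j
  rw [al_symm A j i] at e2
  have hs := solve2 _ _ _ _ _ e1 e2 (det_ne A i j hne)
  exact ⟨sub_eq_zero.mp hs.1, sub_eq_zero.mp hs.2⟩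

end ProofAux

/-- in `𝒰`, for `i ≠ j`, `[b_{i,r+1}, b_{j,s}] = [b_{i,r}, b_{j,s+1}]`. -/
theorem U_bb_shift
    {I : Type} [Fintype I] [DecidableEq I] [Nonempty I] (A : CartanData I)
    (i j : I) (hne : i ≠ j) (r s : ℕ) :
    ⁅uB A i (r + 1), uB A j s⁆ = ⁅uB A i r, uB A j (s + 1)⁆ := by
  have main : ∀ n r s : ℕ, r + s = n →
      ⁅uB A i (r + 1), uB A j s⁆ = ⁅uB A i r, uB A j (s + 1)⁆ := by
    intro n
    induction n with
    | zero =>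
      intro r s hrs
      obtain ⟨hr, hs⟩ := Nat.add_eq_zero.mp hrs
      subst hr; subst hs
      exact U_bb0 A i j hne
    | succ n ih =>
      intro r s hrs
      cases s with
      | zero =>
        obtain ⟨r', rfl⟩ : ∃ r', r = r' + 1 := ⟨n, by omega⟩
        exact (U_key A i j hne r' 0 (ih r' 0 (by omega))).1
      | succ s' =>
        exact (U_key A i j hne r s' (ih r s' (by omega))).2
  exact main (r + s) r s rfl
end
end

section
/- In 𝒰, let i, j ∈ I satisfy c_{ij} = −1. Then [b_{i,0}, [b_{i,0}, b_{j,s}]] = −d_i·b_{j,s} for all s ∈ ℕ, and [b_{i,2}, [b_{i,2}, b_{j,0}]] = −d_i·b_{j,4}. -/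
noncomputable section

section AuxProof

variable {I : Type} [Fintype I] [DecidableEq I] (A : CartanData I)

attribute [local instance] LieRing.ofAssociativeRing

private lemma smul_cancel {M : Type*} [AddCommGroup M] [Module ℂ M] {c : ℂ} (hc : c ≠ 0)
    {x y : M} (h : c • x = c • y) : x = y := by
  have h2 := congrArg (fun z => c⁻¹ • z) h
  simpa [smul_smul, inv_mul_cancel₀ hc] using h2

private lemma smul_lie' (c : ℂ) (x y : UAlg A) : ⁅c • x, y⁆ = c • ⁅x, y⁆ :=
  smul_lie c x y

private lemma lie_smul' (c : ℂ) (x y : UAlg A) : ⁅x, c • y⁆ = c • ⁅x, y⁆ :=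
  lie_smul c x y

private lemma d_ne (l : I) : (A.d l : ℂ) ≠ 0 := by
  exact_mod_cast (A.d_pos l).ne'

private lemma umk_lie (x y : FreeAlgebra ℂ (MinGen I)) :
    RingQuot.mkAlgHom ℂ (URel A) ⁅x, y⁆ =
      ⁅RingQuot.mkAlgHom ℂ (URel A) x, RingQuot.mkAlgHom ℂ (URel A) y⁆ := by
  simp only [Ring.lie_def, map_sub, map_mul]

private lemma urel_hh (k l : I) : ⁅uH1 A k, uH1 A l⁆ = 0 := by
  have h := RingQuot.mkAlgHom_rel ℂ (URel.hh (A := A) k l)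
  rw [umk_lie] at h
  simpa [uH1] using h

private lemma urel_hb (k l : I) :
    ⁅uH1 A k, uB0 A l⁆ = (2 * (A.al k l : ℂ)) • uB1 A l := by
  have h := RingQuot.mkAlgHom_rel ℂ (URel.hb (A := A) k l)
  rw [umk_lie, map_smul] at h
  exact h

private lemma urel_bb (k l : I) :
    ⁅uB1 A k, uB0 A l⁆ = ⁅uB0 A k, uB1 A l⁆ - (if k = l then (2:ℂ) else 0) • uH1 A k := by
  have h := RingQuot.mkAlgHom_rel ℂ (URel.bb (A := A) k l)
  rw [umk_lie, map_sub, umk_lie, map_smul] at h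
  exact h

private lemma urel_serre1 (k l : I) (h1 : A.c k l = -1) :
    ⁅uB0 A k, ⁅uB0 A k, uB0 A l⁆⁆ = (-(A.d k : ℂ)) • uB0 A l := by
  have h := RingQuot.mkAlgHom_rel ℂ (URel.serre1 (A := A) k l h1)
  rw [umk_lie, umk_lie, map_smul] at h
  exact h

private lemma alkk (l : I) : (A.al l l : ℂ) = 2 * (A.d l : ℂ) := by
  unfold CartanData.al
  rw [A.c_diag l]
  push_cast
  ring

private lemma alkk_ne (l : I) : (2 * (A.al l l : ℂ)) ≠ 0 := by
  rw [alkk]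
  exact mul_ne_zero two_ne_zero (mul_ne_zero two_ne_zero (d_ne A l))

private lemma uB_lie_self (l : I) (r : ℕ) :
    ⁅uH1 A l, uB A l r⁆ = (2 * (A.al l l : ℂ)) • uB A l (r + 1) := by
  cases r with
  | zero => exact urel_hb A l l
  | succ n =>
    show ⁅uH1 A l, uB A l (n+1)⁆
        = (2 * (A.al l l : ℂ)) • ((2 * (A.al l l : ℂ))⁻¹ • ⁅uH1 A l, uB A l (n+1)⁆)
    rw [smul_smul, mul_inv_cancel₀ (alkk_ne A l), one_smul]

private lemma uB_succ (l : I) (r : ℕ) :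
    uB A l (r + 1) = (2 * (A.al l l : ℂ))⁻¹ • ⁅uH1 A l, uB A l r⁆ := by
  cases r with
  | zero => rw [uB_lie_self, inv_smul_smul₀ (alkk_ne A l)]
  | succ n => rfl

private lemma uH_lie_uB (k l : I) (r : ℕ) :
    ⁅uH1 A k, uB A l r⁆ = (2 * (A.al k l : ℂ)) • uB A l (r + 1) := by
  induction r with
  | zero => exact urel_hb A k l
  | succ n ih =>
    rw [uB_succ A l n, lie_smul' A, leibniz_lie, urel_hh, zero_lie, zero_add, ih, lie_smul' A,
      uB_lie_self A l (n+1), smul_smul, smul_smul]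
    congr 1
    have h0 := alkk_ne A l
    have h1 : (A.al l l : ℂ) ≠ 0 := right_ne_zero_of_mul h0
    field_simp

variable {i j : I}

private lemma hij_ne (hc : A.c i j = -1) : i ≠ j := by
  intro h
  subst h
  rw [A.c_diag] at hc
  omega

private lemma alij (hc : A.c i j = -1) : (A.al i j : ℂ) = -(A.d i : ℂ) := by
  unfold CartanData.al
  rw [hc]
  push_cast
  ring

private lemma alji (hc : A.c i j = -1) : (A.al j i : ℂ) = -(A.d i : ℂ) := by
  unfold CartanData.al
  rw [A.d_symm j i, hc]
  push_cast
  ring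

private lemma hLii (r : ℕ) :
    ⁅uH1 A i, uB A i r⁆ = ((4:ℂ) * (A.d i : ℂ)) • uB A i (r + 1) := by
  rw [uH_lie_uB, alkk]
  module

private lemma hLjj (s : ℕ) :
    ⁅uH1 A j, uB A j s⁆ = ((4:ℂ) * (A.d j : ℂ)) • uB A j (s + 1) := by
  rw [uH_lie_uB, alkk]
  module

private lemma hLij (hc : A.c i j = -1) (s : ℕ) :
    ⁅uH1 A i, uB A j s⁆ = ((-2:ℂ) * (A.d i : ℂ)) • uB A j (s + 1) := by
  rw [uH_lie_uB, alij A hc]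
  module

private lemma hLji (hc : A.c i j = -1) (r : ℕ) :
    ⁅uH1 A j, uB A i r⁆ = ((-2:ℂ) * (A.d i : ℂ)) • uB A i (r + 1) := by
  rw [uH_lie_uB, alji A hc]
  module

private lemma key_ne (hc : A.c i j = -1) :
    ((8:ℂ) * (A.d j : ℂ) - 2 * (A.d i : ℂ)) ≠ 0 := by
  have hb : (-3 : ℝ) ≤ ((A.c j i : ℤ) : ℝ) := by
    have h1 := A.c_bound i j (hij_ne A hc)
    rw [hc] at h1
    exact_mod_cast (by omega : (-3:ℤ) ≤ A.c j i)
  have h2 : A.d j * ((A.c j i : ℤ) : ℝ) = A.d i * (-1) := by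
    have := A.d_symm i j
    rw [hc] at this
    push_cast at this ⊢
    linarith
  have h3 : (0:ℝ) < 8 * A.d j - 2 * A.d i := by
    nlinarith [A.d_pos i, A.d_pos j, mul_le_mul_of_nonneg_left hb (A.d_pos j).le]
  exact_mod_cast h3.ne'

private lemma shift1 (hc : A.c i j = -1) :
    ∀ s : ℕ, ⁅uB A i 1, uB A j s⁆ = ⁅uB A i 0, uB A j (s + 1)⁆ := by
  intro s
  induction s with
  | zero =>
    have h := urel_bb A i j
    rw [if_neg (hij_ne A hc), zero_smul, sub_zero] at h
    exact h
  | succ s ihs =>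
    have C1 := congrArg (fun z => ⁅uH1 A i, z⁆) ihs
    have C2 := congrArg (fun z => ⁅uH1 A j, z⁆) ihs
    rw [leibniz_lie, hLii A 1, hLij A hc s, leibniz_lie, hLii A 0, hLij A hc (s+1),
      smul_lie' A, smul_lie' A, lie_smul' A, lie_smul' A] at C1
    rw [leibniz_lie, hLji A hc 1, hLjj A s, leibniz_lie, hLji A hc 0, hLjj A (s+1),
      smul_lie' A, smul_lie' A, lie_smul' A, lie_smul' A] at C2
    simp only [Nat.reduceAdd] at C1 C2
    have key : ((8:ℂ) * (A.d j : ℂ) - 2 * (A.d i : ℂ)) • ⁅uB A i 1, uB A j (s + 1)⁆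
        = ((8:ℂ) * (A.d j : ℂ) - 2 * (A.d i : ℂ)) • ⁅uB A i 0, uB A j (s + 1 + 1)⁆ := by
      linear_combination (norm := module) C1 + (2:ℂ) • C2
    exact smul_cancel (key_ne A hc) key

private lemma shiftr (hc : A.c i j = -1) :
    ∀ r s : ℕ, ⁅uB A i (r + 1), uB A j s⁆ = ⁅uB A i r, uB A j (s + 1)⁆ := by
  intro r
  induction r with
  | zero => exact shift1 A hc
  | succ n ih =>
    intro s
    have C1 := congrArg (fun z => ⁅uH1 A i, z⁆) (ih s)
    rw [leibniz_lie, hLii A (n+1), hLij A hc s, leibniz_lie, hLii A n, hLij A hc (s+1),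
      smul_lie' A, smul_lie' A, lie_smul' A, lie_smul' A] at C1
    have key : ((4:ℂ) * (A.d i : ℂ)) • ⁅uB A i (n + 1 + 1), uB A j s⁆
        = ((4:ℂ) * (A.d i : ℂ)) • ⁅uB A i (n + 1), uB A j (s + 1)⁆ := by
      linear_combination (norm := module) C1 + ((2:ℂ) * (A.d i : ℂ)) • (ih (s + 1))
    have h4 : ((4:ℂ) * (A.d i : ℂ)) ≠ 0 :=
      mul_ne_zero (by norm_num) (d_ne A i)
    exact smul_cancel h4 key

private lemma lieHiM (hc : A.c i j = -1) (m : ℕ) :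
    ⁅uH1 A i, ⁅uB A i 0, uB A j m⁆⁆
      = ((2:ℂ) * (A.d i : ℂ)) • ⁅uB A i 0, uB A j (m + 1)⁆ := by
  rw [leibniz_lie, hLii A 0, hLij A hc m, smul_lie' A, lie_smul' A]
  simp only [Nat.reduceAdd]
  rw [shift1 A hc m]
  module

private lemma lieHjM (hc : A.c i j = -1) (m : ℕ) :
    ⁅uH1 A j, ⁅uB A i 0, uB A j m⁆⁆
      = ((4:ℂ) * (A.d j : ℂ) - 2 * (A.d i : ℂ)) • ⁅uB A i 0, uB A j (m + 1)⁆ := by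
  rw [leibniz_lie, hLji A hc 0, hLjj A m, smul_lie' A, lie_smul' A]
  simp only [Nat.reduceAdd]
  rw [shift1 A hc m]
  module

private lemma serre_all (hc : A.c i j = -1) :
    ∀ m : ℕ, ⁅uB A i 0, ⁅uB A i 0, uB A j m⁆⁆ = (-(A.d i : ℂ)) • uB A j m := by
  intro m
  induction m with
  | zero => exact urel_serre1 A i j hc
  | succ n ih =>
    have C1 := congrArg (fun z => ⁅uH1 A i, z⁆) ih
    have C2 := congrArg (fun z => ⁅uH1 A j, z⁆) ih
    rw [leibniz_lie, lieHiM A hc n, hLii A 0, lie_smul' A, lie_smul' A, hLij A hc n, smul_lie' A] at C1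
    rw [leibniz_lie, lieHjM A hc n, hLji A hc 0, lie_smul' A, lie_smul' A, hLjj A n, smul_lie' A] at C2
    simp only [Nat.reduceAdd] at C1 C2
    have key : ((8:ℂ) * (A.d j : ℂ) - 2 * (A.d i : ℂ)) • ⁅uB A i 0, ⁅uB A i 0, uB A j (n + 1)⁆⁆
        = ((8:ℂ) * (A.d j : ℂ) - 2 * (A.d i : ℂ)) • ((-(A.d i : ℂ)) • uB A j (n + 1)) := by
      linear_combination (norm := module) C1 + (2:ℂ) • C2
    exact smul_cancel (key_ne A hc) key

private lemma N1 (hc : A.c i j = -1) (m : ℕ) :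
    ⁅uB A i 1, ⁅uB A i 0, uB A j m⁆⁆ = (A.d i : ℂ) • uB A j (m + 1) := by
  have C1 := congrArg (fun z => ⁅uH1 A i, z⁆) (serre_all A hc m)
  rw [leibniz_lie, lieHiM A hc m, hLii A 0, lie_smul' A, lie_smul' A, hLij A hc m, smul_lie' A] at C1
  simp only [Nat.reduceAdd] at C1
  have key : ((4:ℂ) * (A.d i : ℂ)) • ⁅uB A i 1, ⁅uB A i 0, uB A j m⁆⁆
      = ((4:ℂ) * (A.d i : ℂ)) • ((A.d i : ℂ) • uB A j (m + 1)) := by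
    linear_combination (norm := module) C1 - ((2:ℂ) * (A.d i : ℂ)) • (serre_all A hc (m + 1))
  exact smul_cancel (mul_ne_zero (by norm_num) (d_ne A i)) key

private lemma N2 (hc : A.c i j = -1) (m : ℕ) :
    ⁅uB A i 2, ⁅uB A i 0, uB A j m⁆⁆ = (-(A.d i : ℂ)) • uB A j (m + 2) := by
  have C1 := congrArg (fun z => ⁅uH1 A i, z⁆) (N1 A hc m)
  rw [leibniz_lie, lieHiM A hc m, hLii A 1, lie_smul' A, lie_smul' A, hLij A hc (m + 1), smul_lie' A,
    N1 A hc (m + 1)] at C1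
  simp only [Nat.reduceAdd] at C1
  have key : ((4:ℂ) * (A.d i : ℂ)) • ⁅uB A i 2, ⁅uB A i 0, uB A j m⁆⁆
      = ((4:ℂ) * (A.d i : ℂ)) • ((-(A.d i : ℂ)) • uB A j (m + 1 + 1)) := by
    linear_combination (norm := module) C1
  exact smul_cancel (mul_ne_zero (by norm_num) (d_ne A i)) key

end AuxProof

/-- in `𝒰`, if `c_{ij} = -1` then `[b_{i,0},[b_{i,0}, b_{j,s}]] = -d_i b_{j,s}`
for all `s`, and `[b_{i,2},[b_{i,2}, b_{j,0}]] = -d_i b_{j,4}`. -/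
theorem U_serre_consequences
    {I : Type} [Fintype I] [DecidableEq I] [Nonempty I] (A : CartanData I)
    (i j : I) (hc : A.c i j = -1) :
    (∀ s : ℕ, ⁅uB A i 0, ⁅uB A i 0, uB A j s⁆⁆ = (-(A.d i : ℂ)) • uB A j s) ∧
    ⁅uB A i 2, ⁅uB A i 2, uB A j 0⁆⁆ = (-(A.d i : ℂ)) • uB A j 4 := by
  refine ⟨fun s => serre_all A hc s, ?_⟩
  rw [show ⁅uB A i 2, uB A j 0⁆ = ⁅uB A i 0, uB A j 2⁆ from
    (shiftr A hc 1 0).trans (shift1 A hc 1)]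
  exact N2 A hc 2
end
end
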